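/- Theorem 1 (demographic parity implies counterfactual fairness under trivial latent construction): let Ŷ' : χ × α → Y be a deterministic predictor satisfying demographic parity with respect to (X, A). Define the latent variable U := Ŷ'(X, A) and the counterfactual predictor Ŷ_{A←a}(u) := u (the identity, ignoring the intervention). Then (i) U is independent of A, and (ii) the predictor is counterfactually fair: for all x, a, a', y with P(X=x, A=a) > 0, P(Ŷ_{A←a}(U) = y | X=x, A=a) = P(Ŷ_{A←a'}(U) = y | X=x, A=a). -/

import Mathlib

open MeasureTheory ProbabilityTheory

/-- Theorem 1: a deterministic predictor `Ŷ'` satisfying demographic parity can be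
turned into a counterfactually fair predictor by taking the latent variable
`U := Ŷ'(X, A)` and the identity counterfactual predictor `Ŷ_{A←a}(u) := u`.
Then (i) `U` is independent of `A`, and (ii) the identity predictor is
counterfactually fair. -/
theorem demographic_parity_implies_counterfactual_fairness
    {Ω χ α Y : Type*} [Fintype Ω] [Fintype χ] [Fintype α] [Fintype Y]
    [MeasurableSpace Ω] [MeasurableSingletonClass Ω]
    (μ : Measure Ω) [IsProbabilityMeasure μ]
    (X : Ω → χ) (A : Ω → α) (Yhat' : χ × α → Y)
    (hDP : ∀ (y : Y) (a a' : α), μ {ω | A ω = a} ≠ 0 → μ {ω | A ω = a'} ≠ 0 →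
      μ[|{ω | A ω = a}] {ω | Yhat' (X ω, A ω) = y} =
        μ[|{ω | A ω = a'}] {ω | Yhat' (X ω, A ω) = y}) :
    -- the latent variable `U := Ŷ'(X, A)` and identity predictor `Ŷ_{A←a} := id`
    (∀ (u : Y) (a : α),
      μ ({ω | Yhat' (X ω, A ω) = u} ∩ {ω | A ω = a}) =
        μ {ω | Yhat' (X ω, A ω) = u} * μ {ω | A ω = a}) ∧
    (∀ (x : χ) (a a' : α) (y : Y),
      μ ({ω | X ω = x} ∩ {ω | A ω = a}) ≠ 0 →
      μ[|({ω | X ω = x} ∩ {ω | A ω = a})]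
          {ω | (fun u => u) (Yhat' (X ω, A ω)) = y} =
        μ[|({ω | X ω = x} ∩ {ω | A ω = a})]
          {ω | (fun u => u) (Yhat' (X ω, A ω)) = y}) := by
  constructor
  · intro u a
    by_cases ha : μ {ω | A ω = a} = 0
    · have h1 : μ ({ω | Yhat' (X ω, A ω) = u} ∩ {ω | A ω = a}) = 0 :=
        le_antisymm (le_trans (measure_mono Set.inter_subset_right) ha.le) zero_le
      rw [h1, ha, mul_zero]
    · set c := μ[|{ω | A ω = a}] {ω | Yhat' (X ω, A ω) = u} with hc
      have key : ∀ a' : α, μ ({ω | Yhat' (X ω, A ω) = u} ∩ {ω | A ω = a'}) =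
          c * μ {ω | A ω = a'} := by
        intro a'
        by_cases ha' : μ {ω | A ω = a'} = 0
        · have h1 : μ ({ω | Yhat' (X ω, A ω) = u} ∩ {ω | A ω = a'}) = 0 :=
            le_antisymm (le_trans (measure_mono Set.inter_subset_right) ha'.le) zero_le
          rw [h1, ha', mul_zero]
        · have hmeas : MeasurableSet {ω | A ω = a'} := (Set.toFinite _).measurableSet
          have hdp := hDP u a a' ha ha'
          have hcond : c = μ[|{ω | A ω = a'}] {ω | Yhat' (X ω, A ω) = u} := hdp
          rw [cond_apply hmeas] at hcond
          rw [Set.inter_comm]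
          rw [hcond, mul_comm (μ {ω | A ω = a'})⁻¹, mul_assoc,
            ENNReal.inv_mul_cancel ha' (measure_ne_top μ _), mul_one]
      have hsum : μ {ω | Yhat' (X ω, A ω) = u} = c := by
        have hcover : {ω | Yhat' (X ω, A ω) = u} =
            ⋃ a' : α, ({ω | Yhat' (X ω, A ω) = u} ∩ {ω | A ω = a'}) := by
          ext ω; simp
        have hdisj : Pairwise (Function.onFun Disjoint
            fun a' : α => {ω | Yhat' (X ω, A ω) = u} ∩ {ω | A ω = a'}) := by
          intro i j hij
          refine Set.disjoint_left.2 ?_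
          rintro ω ⟨-, hi⟩ ⟨-, hj⟩
          exact hij (hi.symm.trans hj)
        calc μ {ω | Yhat' (X ω, A ω) = u}
            = ∑' a' : α, μ ({ω | Yhat' (X ω, A ω) = u} ∩ {ω | A ω = a'}) := by
              conv_lhs => rw [hcover]
              exact measure_iUnion hdisj fun _ => (Set.toFinite _).measurableSet
          _ = ∑ a' : α, c * μ {ω | A ω = a'} := by
              rw [tsum_fintype]; exact Finset.sum_congr rfl fun a' _ => key a'
          _ = c * ∑ a' : α, μ {ω | A ω = a'} := by rw [Finset.mul_sum]
          _ = c * μ (⋃ a' : α, {ω | A ω = a'}) := by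
              rw [measure_iUnion ?_ fun _ => (Set.toFinite _).measurableSet, tsum_fintype]
              intro i j hij
              refine Set.disjoint_left.2 ?_
              rintro ω hi hj
              exact hij ((Set.mem_setOf_eq ▸ hi).symm.trans hj)
          _ = c := by
              have : (⋃ a' : α, {ω | A ω = a'}) = Set.univ := by ext ω; simp
              rw [this, measure_univ, mul_one]
      rw [key a, hsum]
  · intro x a a' y _
    rfl
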